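/- Let d ≥ 12 be even, k = (d+2)/2, λ = ⌈k(k-1)/(d+1)⌉ = ⌈d(d+2)/(4(d+1))⌉, and suppose B = {B_i}_{i=1}^{b} is a (d+1, k, λ) block design on {1,...,d+1}. Let {f_i}_{i=1}^{d+1} ⊂ R^d be a simplex ETF with ⟨f_i, f_j⟩ = -1/d for i ≠ j, and g_i = (Σ_{j∈B_i} f_j)/||Σ_{j∈B_i} f_j||. Then the maximum of |⟨x, y⟩| over distinct vectors x, y in {f_i}_{i=1}^{d+1} ∪ {g_i}_{i=1}^{b} is at most max{sqrt((d+2)/d^2), 4/(d+2) + 3/(d(d+2))}. -/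

import Mathlib

open Finset

theorem EDLC.inner_block_sums (d : ℕ) (hd : 0 < d) (f : Fin (d+1) → EuclideanSpace ℝ (Fin d))
    (hnorm : ∀ i, ‖f i‖ = 1)
    (hangle : ∀ i j, i ≠ j → (inner ℝ (f i) (f j) : ℝ) = -1 / d)
    (S T : Finset (Fin (d+1))) :
    (inner ℝ (∑ x ∈ S, f x) (∑ y ∈ T, f y) : ℝ)
      = (S ∩ T).card * (1 + 1/(d:ℝ)) - S.card * T.card / d := by
  rw [sum_inner]
  have hpt : ∀ x y : Fin (d+1), (inner ℝ (f x) (f y) : ℝ)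
      = (if x = y then ((1:ℝ) + 1/(d:ℝ)) else 0) + (-1/(d:ℝ)) := by
    intro x y
    by_cases h : x = y
    · subst h
      rw [real_inner_self_eq_norm_sq, hnorm]
      rw [if_pos rfl]; ring
    · rw [hangle _ _ h]; simp [h]
  have key : ∀ x, (inner ℝ (f x) (∑ y ∈ T, f y) : ℝ)
      = (if x ∈ T then ((1:ℝ) + 1/(d:ℝ)) else 0) + T.card * (-1/(d:ℝ)) := by
    intro x
    rw [inner_sum]
    simp_rw [hpt]
    rw [Finset.sum_add_distrib, Finset.sum_ite_eq T x (fun _ => ((1:ℝ)+1/(d:ℝ)))]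
    simp [mul_comm]
  simp_rw [key]
  rw [Finset.sum_add_distrib, Finset.sum_ite_mem, Finset.sum_const, Finset.sum_const]
  have hd' : (d:ℝ) ≠ 0 := by exact_mod_cast hd.ne'
  field_simp
  simp only [nsmul_eq_mul]; field_simp
  ring

theorem EDLC.design_repl (d b k lam : ℕ) (B : Fin b → Finset (Fin (d + 1)))
    (hBcard : ∀ i, (B i).card = k)
    (hpair : ∀ x y : Fin (d + 1), x ≠ y →
      (Finset.univ.filter (fun i => x ∈ B i ∧ y ∈ B i)).card = lam)
    (x : Fin (d+1)) :
    (Finset.univ.filter (fun i => x ∈ B i)).card * (k - 1) = d * lam := by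
  have h1 : ∑ y ∈ Finset.univ.erase x, (Finset.univ.filter (fun i => x ∈ B i ∧ y ∈ B i)).card
      = d * lam := by
    rw [Finset.sum_congr rfl (fun y hy => hpair x y (Ne.symm (Finset.ne_of_mem_erase hy)))]
    rw [Finset.sum_const, Finset.card_erase_of_mem (Finset.mem_univ x)]
    simp [Finset.card_univ, smul_eq_mul]
  rw [← h1]
  have h2 : ∀ y, (Finset.univ.filter (fun i => x ∈ B i ∧ y ∈ B i)).card
      = ∑ i : Fin b, if x ∈ B i ∧ y ∈ B i then 1 else 0 := by
    intro y; rw [Finset.card_filter]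
  simp_rw [h2]
  rw [Finset.sum_comm]
  have h3 : ∀ i : Fin b, (∑ y ∈ Finset.univ.erase x, if x ∈ B i ∧ y ∈ B i then 1 else 0)
      = if x ∈ B i then k - 1 else 0 := by
    intro i
    by_cases hx : x ∈ B i
    · simp only [hx, true_and, if_true]
      have e1 : (∑ y ∈ Finset.univ.erase x, if y ∈ B i then 1 else 0)
          = ((Finset.univ.erase x).filter (· ∈ B i)).card := by
        rw [Finset.card_filter]
      rw [e1]
      have e2 : (Finset.univ.erase x).filter (· ∈ B i) = (B i).erase x := by
        ext y; simp [Finset.mem_erase, and_comm]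
      rw [e2, Finset.card_erase_of_mem hx, hBcard]
    · simp [hx]
  simp_rw [h3]
  rw [Finset.sum_ite, Finset.sum_const, Finset.sum_const_zero, add_zero, smul_eq_mul]

theorem EDLC.design_bk (d b k lam : ℕ) (B : Fin b → Finset (Fin (d + 1)))
    (hBcard : ∀ i, (B i).card = k)
    (r_eq : ∀ x, (Finset.univ.filter (fun i => x ∈ B i)).card = 2 * lam) :
    b * k = (d + 1) * (2 * lam) := by
  have h1 : ∀ i : Fin b, (B i).card = ∑ x : Fin (d+1), if x ∈ B i then 1 else 0 := by
    intro i
    rw [← Finset.card_filter]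
    congr 1
    ext y; simp
  have h : ∑ i : Fin b, (B i).card
      = ∑ x : Fin (d+1), (Finset.univ.filter (fun i => x ∈ B i)).card := by
    simp_rw [h1, Finset.card_filter]
    exact Finset.sum_comm
  simp_rw [hBcard, r_eq, Finset.sum_const, Finset.card_univ, smul_eq_mul] at h
  simpa using h

theorem EDLC.design_sumM (d b k lam : ℕ) (B : Fin b → Finset (Fin (d + 1)))
    (hBcard : ∀ i, (B i).card = k)
    (r_eq : ∀ x, (Finset.univ.filter (fun i => x ∈ B i)).card = 2 * lam)
    (i : Fin b) :
    ∑ j ∈ Finset.univ.erase i, (B i ∩ B j).card = k * (2 * lam - 1) := by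
  have hcard : ∀ j, (B i ∩ B j).card = ∑ x ∈ B i, if x ∈ B j then 1 else 0 := by
    intro j
    rw [← Finset.card_filter, Finset.filter_mem_eq_inter]
  simp_rw [hcard]
  rw [Finset.sum_comm]
  have h2 : ∀ x ∈ B i, (∑ j ∈ Finset.univ.erase i, if x ∈ B j then 1 else 0) = 2 * lam - 1 := by
    intro x hx
    rw [← Finset.card_filter, Finset.filter_erase, Finset.card_erase_of_mem, r_eq]
    exact Finset.mem_filter.mpr ⟨Finset.mem_univ i, hx⟩
  rw [Finset.sum_congr rfl h2, Finset.sum_const, hBcard, smul_eq_mul]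

theorem EDLC.design_sumM2 (d b k lam : ℕ) (B : Fin b → Finset (Fin (d + 1)))
    (hBcard : ∀ i, (B i).card = k)
    (hpair : ∀ x y : Fin (d + 1), x ≠ y →
      (Finset.univ.filter (fun i => x ∈ B i ∧ y ∈ B i)).card = lam)
    (i : Fin b) :
    ∑ j ∈ Finset.univ.erase i, (B i ∩ B j).card * ((B i ∩ B j).card - 1)
      = k * ((k - 1) * (lam - 1)) := by
  have key : ∀ j, (B i ∩ B j).card * ((B i ∩ B j).card - 1)
      = ∑ x ∈ B i, ∑ y ∈ (B i).erase x, if x ∈ B j ∧ y ∈ B j then 1 else 0 := by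
    intro j
    have hinner : ∀ x ∈ B i, (∑ y ∈ (B i).erase x, if x ∈ B j ∧ y ∈ B j then 1 else 0)
        = if x ∈ B j then (B i ∩ B j).card - 1 else 0 := by
      intro x hx
      by_cases hxj : x ∈ B j
      · simp only [hxj, true_and, if_true]
        rw [← Finset.card_filter, Finset.filter_erase, Finset.filter_mem_eq_inter,
          Finset.card_erase_of_mem (Finset.mem_inter.mpr ⟨hx, hxj⟩)]
      · simp [hxj]
    rw [Finset.sum_congr rfl hinner, Finset.sum_ite, Finset.sum_const, Finset.sum_const_zero,
      add_zero, smul_eq_mul, Finset.filter_mem_eq_inter]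
  simp_rw [key]
  rw [Finset.sum_comm]
  have h2 : ∀ x ∈ B i, (∑ y ∈ (B i).erase x,
      ∑ j ∈ Finset.univ.erase i, if x ∈ B j ∧ y ∈ B j then 1 else 0) = (k-1) * (lam - 1) := by
    intro x hx
    have h3 : ∀ y ∈ (B i).erase x,
        (∑ j ∈ Finset.univ.erase i, if x ∈ B j ∧ y ∈ B j then 1 else 0) = lam - 1 := by
      intro y hy
      rw [← Finset.card_filter, Finset.filter_erase, Finset.card_erase_of_mem, hpair]
      · exact Ne.symm (Finset.mem_erase.mp hy).1
      · exact Finset.mem_filter.mpr ⟨Finset.mem_univ i, hx, Finset.mem_of_mem_erase hy⟩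
    rw [Finset.sum_congr rfl h3, Finset.sum_const, Finset.card_erase_of_mem hx, hBcard,
      smul_eq_mul]
  have h4 : ∀ x ∈ B i, (∑ j ∈ Finset.univ.erase i,
      ∑ y ∈ (B i).erase x, if x ∈ B j ∧ y ∈ B j then 1 else 0) = (k-1) * (lam-1) := by
    intro x hx
    rw [Finset.sum_comm]
    exact h2 x hx
  rw [Finset.sum_congr rfl h4, Finset.sum_const, hBcard, smul_eq_mul]

theorem EDLC.ceil_lam (d s : ℕ) (h : d = 4*s + 2 ∨ d = 4*s) (hs : 1 ≤ s) :
    Nat.ceil (((d : ℚ) * (d + 2)) / (4 * ((d : ℚ) + 1))) = s + 1 := by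
  have hd0 : (0:ℚ) < 4 * ((d:ℚ) + 1) := by positivity
  rw [Nat.ceil_eq_iff (by omega : s + 1 ≠ 0)]
  constructor
  · rw [lt_div_iff₀ hd0]
    rcases h with h | h <;> subst h <;> push_cast <;> ring_nf <;> nlinarith [hs,
      (by exact_mod_cast hs : (1:ℚ) ≤ s)]
  · rw [div_le_iff₀ hd0]
    rcases h with h | h <;> subst h <;> push_cast <;> ring_nf <;> nlinarith [
      (by exact_mod_cast hs : (1:ℚ) ≤ s)]

theorem EDLC.intersect_eq (s b : ℕ) (hb : b = 4*s + 3) (m : Fin b → ℕ) (i : Fin b)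
    (h1 : ∑ j ∈ Finset.univ.erase i, m j = (2*s+2) * (2 * (s+1) - 1))
    (h2 : ∑ j ∈ Finset.univ.erase i, m j * (m j - 1) = (2*s+2) * ((2*s+2 - 1) * ((s+1) - 1))) :
    ∀ j, j ≠ i → m j = s + 1 := by
  have e1 : ∀ (n : ℕ), ((n * (n-1) : ℕ) : ℤ) = (n:ℤ)^2 - n := by
    intro n
    cases n with
    | zero => simp
    | succ p => push_cast; ring
  have c1 : (∑ j ∈ Finset.univ.erase i, (m j : ℤ)) = (2*(s:ℤ)+2) * (2*s+1) := by
    have := congrArg (Nat.cast : ℕ → ℤ) h1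
    push_cast [Nat.cast_sub (by omega : 1 ≤ 2*(s+1))] at this
    rw [this]; ring
  have c2 : (∑ j ∈ Finset.univ.erase i, ((m j : ℤ)^2 - m j)) = (2*(s:ℤ)+2) * ((2*s+1) * s) := by
    rw [← Finset.sum_congr rfl (fun j _ => e1 (m j)), ← Nat.cast_sum, h2]
    push_cast [Nat.cast_sub (by omega : 1 ≤ 2*s+2), Nat.cast_sub (by omega : 1 ≤ s+1)]
    ring
  have hcard : (Finset.univ.erase i).card = 4*s + 2 := by
    rw [Finset.card_erase_of_mem (Finset.mem_univ i), Finset.card_univ, Fintype.card_fin, hb]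
    omega
  have hsum0 : ∑ j ∈ Finset.univ.erase i, ((m j : ℤ) - (s+1))^2 = 0 := by
    have expand : ∀ j, ((m j : ℤ) - (s+1))^2
        = ((m j : ℤ)^2 - m j) - (2*(s:ℤ)+1) * (m j) + ((s:ℤ)+1)^2 := by
      intro j; ring
    rw [Finset.sum_congr rfl (fun j _ => expand j), Finset.sum_add_distrib,
      Finset.sum_sub_distrib, c2, ← Finset.mul_sum, c1, Finset.sum_const, hcard]
    push_cast
    ring
  intro j hj
  have hmem : j ∈ Finset.univ.erase i := Finset.mem_erase.mpr ⟨hj, Finset.mem_univ j⟩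
  have hz := (Finset.sum_eq_zero_iff_of_nonneg
    (fun j _ => sq_nonneg ((m j : ℤ) - (s+1)))).mp hsum0 j hmem
  have : (m j : ℤ) = (s:ℤ) + 1 := by nlinarith [hz]
  exact_mod_cast this


set_option maxHeartbeats 2000000 in
/-- For even `d ≥ 12`, `k = (d+2)/2` and `λ = ⌈k(k-1)/(d+1)⌉ = ⌈d(d+2)/(4(d+1))⌉`,
the UNTF obtained by adjoining the normalized block sums of a `(d+1, k, λ)` block
design to a simplex ETF has maximum coherence at most
`max{√((d+2)/d²), 4/(d+2) + 3/(d(d+2))}`. -/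
theorem even_design_low_coherence (d b k lam : ℕ) (hd : 12 ≤ d) (heven : Even d)
    (hk : 2 * k = d + 2)
    (hlam : lam = Nat.ceil (((d : ℚ) * (d + 2)) / (4 * ((d : ℚ) + 1))))
    (f : Fin (d + 1) → EuclideanSpace ℝ (Fin d))
    (hnorm : ∀ i, ‖f i‖ = 1)
    (hangle : ∀ i j, i ≠ j → (inner ℝ (f i) (f j) : ℝ) = -1 / d)
    (B : Fin b → Finset (Fin (d + 1)))
    (hBcard : ∀ i, (B i).card = k)
    (hpair : ∀ x y : Fin (d + 1), x ≠ y →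
      (Finset.univ.filter (fun i => x ∈ B i ∧ y ∈ B i)).card = lam)
    (g : Fin b → EuclideanSpace ℝ (Fin d))
    (hg : ∀ i, g i = ‖∑ j ∈ B i, f j‖⁻¹ • ∑ j ∈ B i, f j) :
    ∀ a c : Fin (d + 1) ⊕ Fin b, a ≠ c →
      |(inner ℝ (Sum.elim f g a) (Sum.elim f g c) : ℝ)| ≤
        max (Real.sqrt (((d : ℝ) + 2) / (d : ℝ) ^ 2))
          (4 / ((d : ℝ) + 2) + 3 / ((d : ℝ) * ((d : ℝ) + 2))) := by
  obtain ⟨s, hds⟩ : ∃ s, d = 4*s + 2 ∨ d = 4*s := by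
    obtain ⟨t, ht⟩ := heven
    exact ⟨t/2, by omega⟩
  have hs3 : 3 ≤ s := by omega
  have hlam' : lam = s + 1 := by rw [hlam]; exact EDLC.ceil_lam d s hds (by omega)
  -- replication number
  have r_eq : ∀ x, (Finset.univ.filter (fun i => x ∈ B i)).card = 2 * lam := by
    intro x
    have h := EDLC.design_repl d b k lam B hBcard hpair x
    have hd2 : d = 2 * (k - 1) := by omega
    have h' : (Finset.univ.filter (fun i => x ∈ B i)).card * (k-1) = (2 * lam) * (k-1) := by
      rw [h, hd2]; ring
    exact Nat.eq_of_mul_eq_mul_right (by omega) h'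
  have hbk := EDLC.design_bk d b k lam B hBcard r_eq
  rcases hds with hd2 | hd4
  swap
  · -- d = 4s : parameters are contradictory
    exfalso
    have hkv : k = 2*s + 1 := by omega
    rw [hkv, hlam', hd4] at hbk
    have h1 : ((2:ℤ)*s+1) * ((4*s+3) - b) = 1 := by
      have hz : (b:ℤ) * (2*s+1) = (4*s+1) * (2*(s+1)) := by exact_mod_cast hbk
      ring_nf
      ring_nf at hz
      linarith
    have h2 : ((2:ℤ)*s+1) ∣ 1 := ⟨_, h1.symm⟩
    have h3 := Int.le_of_dvd one_pos h2
    have : (3:ℤ) ≤ s := by exact_mod_cast hs3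
    linarith
  -- main case : d = 4s + 2
  have hkv : k = 2*s + 2 := by omega
  have hbv : b = 4*s + 3 := by
    have h' : b * k = (4*s+3) * k := by rw [hbk, hd2, hkv, hlam']; ring
    have := Nat.eq_of_mul_eq_mul_right (show 0 < k by omega) h'
    exact this
  -- all pairwise intersections are s+1
  have hm : ∀ i j : Fin b, j ≠ i → (B i ∩ B j).card = s + 1 := by
    intro i
    apply EDLC.intersect_eq s b hbv (fun j => (B i ∩ B j).card) i
    · rw [EDLC.design_sumM d b k lam B hBcard r_eq i, hkv, hlam']
    · rw [EDLC.design_sumM2 d b k lam B hBcard hpair i, hkv, hlam']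
  -- real arithmetic setup
  set σ : ℝ := (s:ℝ) with hσ
  have hσ3 : (3:ℝ) ≤ σ := by rw [hσ]; exact_mod_cast hs3
  have hdR : (d:ℝ) = 4*σ + 2 := by rw [hd2]; push_cast; ring
  have hkR : (k:ℝ) = 2*σ + 2 := by rw [hkv]; push_cast; ring
  have hdpos : (0:ℝ) < (d:ℝ) := by rw [hdR]; linarith
  have hIBS := EDLC.inner_block_sums d (by omega) f hnorm hangle
  have hsq : (0:ℝ) < σ + 1 := by linarith
  set t : ℝ := Real.sqrt (σ + 1) with hT
  have ht2 : t * t = σ + 1 := Real.mul_self_sqrt (le_of_lt hsq)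
  have ht0 : 0 < t := Real.sqrt_pos.mpr hsq
  have ht1 : 1 ≤ t := by nlinarith
  -- norm of block sums
  have hss : ∀ i, (inner ℝ (∑ j ∈ B i, f j) (∑ j ∈ B i, f j) : ℝ) = σ + 1 := by
    intro i
    rw [hIBS, Finset.inter_self, hBcard i, hkR, hdR]
    field_simp
    ring
  have hnormS : ∀ i, ‖∑ j ∈ B i, f j‖ = t := by
    intro i
    rw [hT, ← hss i, real_inner_self_eq_norm_sq, Real.sqrt_sq (norm_nonneg _)]
  -- the target bound
  have hM : Real.sqrt (((d:ℝ)+2)/(d:ℝ)^2) = t / (2*σ + 1) := by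
    rw [hdR, show (4*σ+2+2)/(4*σ+2)^2 = (σ+1)/(2*σ+1)^2 by field_simp; ring,
      Real.sqrt_div (le_of_lt hsq), Real.sqrt_sq (by linarith : (0:ℝ) ≤ 2*σ+1)]
  have hb1 : 1/(4*σ+2) ≤ t/(2*σ+1) := by
    rw [div_le_div_iff₀ (by linarith) (by linarith)]
    nlinarith
  -- f-g coherence bound
  have hfg : ∀ (x : Fin (d+1)) (i : Fin b),
      |(inner ℝ (f x) (g i) : ℝ)| ≤ t/(2*σ+1) := by
    intro x i
    rw [hg i, real_inner_smul_right, hnormS i]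
    have hfs : (inner ℝ (f x) (∑ j ∈ B i, f j) : ℝ)
        = ({x} ∩ B i).card * (1+1/(d:ℝ)) - (k:ℝ)/(d:ℝ) := by
      have h := hIBS {x} (B i)
      rw [Finset.sum_singleton] at h
      rw [h, Finset.card_singleton, hBcard]
      push_cast; ring
    rw [hfs]
    by_cases hx : x ∈ B i
    · rw [Finset.singleton_inter_of_mem hx, Finset.card_singleton]
      have hval : ((1:ℕ) : ℝ) * (1+1/(d:ℝ)) - (k:ℝ)/(d:ℝ) = 1/2 := by
        rw [hdR, hkR]; push_cast; field_simp; ring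
      rw [hval, abs_mul, abs_inv, abs_of_pos ht0, abs_of_pos one_half_pos,
        inv_mul_eq_div, div_le_div_iff₀ ht0 (by linarith)]
      nlinarith
    · rw [Finset.singleton_inter_of_notMem hx]
      have hval : ((Finset.card (∅ : Finset (Fin (d+1)))) : ℝ) * (1+1/(d:ℝ)) - (k:ℝ)/(d:ℝ)
          = -((σ+1)/(2*σ+1)) := by
        rw [hdR, hkR]
        simp only [Finset.card_empty, Nat.cast_zero, zero_mul, zero_sub]
        rw [neg_inj]
        rw [div_eq_div_iff (by linarith) (by linarith)]
        ring
      rw [hval, abs_mul, abs_inv, abs_of_pos ht0, abs_neg,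
        abs_of_pos (by positivity : (0:ℝ) < (σ+1)/(2*σ+1)),
        inv_mul_eq_div, div_le_div_iff₀ ht0 (by linarith)]
      have e : (σ+1)/(2*σ+1) * (2*σ+1) = σ+1 := div_mul_cancel₀ _ (by linarith)
      rw [e]
      nlinarith
  intro a c hac
  apply le_trans ?_ (le_max_left _ _)
  rw [hM]
  match a, c with
  | Sum.inl x, Sum.inl y =>
    have hxy : x ≠ y := by simpa using hac
    simp only [Sum.elim_inl]
    rw [hangle x y hxy, abs_div, abs_neg, abs_one, abs_of_pos hdpos, hdR]
    exact hb1
  | Sum.inl x, Sum.inr i =>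
    simp only [Sum.elim_inl, Sum.elim_inr]
    exact hfg x i
  | Sum.inr i, Sum.inl x =>
    simp only [Sum.elim_inl, Sum.elim_inr]
    rw [real_inner_comm]
    exact hfg x i
  | Sum.inr i, Sum.inr j =>
    have hij : i ≠ j := by simpa using hac
    simp only [Sum.elim_inr]
    rw [hg i, hg j, real_inner_smul_left, real_inner_smul_right, hnormS i, hnormS j]
    have hsij : (inner ℝ (∑ x ∈ B i, f x) (∑ x ∈ B j, f x) : ℝ) = -((σ+1)/(4*σ+2)) := by
      rw [hIBS, hBcard, hBcard, hm i j (Ne.symm hij), hkR, hdR]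
      push_cast
      rw [eq_comm, neg_eq_iff_eq_neg, div_eq_iff (by linarith : (4*σ+2:ℝ) ≠ 0)]
      field_simp
      ring
    rw [hsij]
    have e : t⁻¹ * (t⁻¹ * -((σ+1)/(4*σ+2))) = -(1/(4*σ+2)) := by
      have h1 : t ≠ 0 := ne_of_gt ht0
      have h2 : (4*σ+2 : ℝ) ≠ 0 := by linarith
      field_simp
      nlinarith [ht2]
    rw [e, abs_neg, abs_of_pos (by positivity : (0:ℝ) < 1/(4*σ+2))]
    exact hb1
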